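/- Let 𝒳 be a set, d > 0, C₁ > 0 and B > 0. Let (λ_j)_{j≥1} be nonnegative reals with λ_j ≤ C₁ j^{2/d} for all j ≥ 1, and let u_j : 𝒳 → ℝ be functions such that for every x ∈ 𝒳 and every t ∈ (0,1], the series Σ_{j≥1} e^{−t λ_j} u_j(x)² converges and satisfies Σ_{j≥1} e^{−t λ_j} u_j(x)² ≤ B t^{−d/2}. Then there exists a constant K > 0, depending only on B, C₁ and d (one may take K = e·B·max(C₁,1)^{d/2}), such that for every integer J ≥ 1 and every x ∈ 𝒳, Σ_{j=1}^J u_j(x)² ≤ K J. In particular sup_{J≥1} sup_{x∈𝒳} (1/J) Σ_{j=1}^J u_j(x)² < ∞. -/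
import Mathlib


/-- If `λ_j ≤ C₁ j^{2/d}` and the heat-trace-type bound
`Σ_{j≥1} e^{−tλ_j} u_j(x)² ≤ B t^{−d/2}` holds for all `t ∈ (0,1]`, then
`Σ_{j=1}^J u_j(x)² ≤ K J` with `K = e·B·max(C₁,1)^{d/2}`; in particular the
normalized partial sums are uniformly bounded. -/
theorem partial_sum_bound_from_heat_trace
    (d C₁ B : ℝ) (hd : 0 < d) (hC₁ : 0 < C₁) (hB : 0 < B) :
    ∃ K : ℝ, 0 < K ∧ K = Real.exp 1 * B * max C₁ 1 ^ (d / 2) ∧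
      ∀ (𝒳 : Type) (lam : ℕ → ℝ),
        (∀ j : ℕ, 1 ≤ j → 0 ≤ lam j) →
        (∀ j : ℕ, 1 ≤ j → lam j ≤ C₁ * (j : ℝ) ^ (2 / d)) →
        ∀ u : ℕ → 𝒳 → ℝ,
          (∀ x : 𝒳, ∀ t : ℝ, 0 < t → t ≤ 1 →
            Summable (fun j : {k : ℕ // 1 ≤ k} =>
              Real.exp (-t * lam j.1) * (u j.1 x) ^ 2) ∧
            (∑' j : {k : ℕ // 1 ≤ k}, Real.exp (-t * lam j.1) * (u j.1 x) ^ 2)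
              ≤ B * t ^ (-(d / 2))) →
          (∀ J : ℕ, 1 ≤ J → ∀ x : 𝒳,
            (∑ j ∈ Finset.Icc 1 J, (u j x) ^ 2) ≤ K * J) ∧
          BddAbove {r : ℝ | ∃ J : ℕ, 1 ≤ J ∧ ∃ x : 𝒳,
            r = (J : ℝ)⁻¹ * ∑ j ∈ Finset.Icc 1 J, (u j x) ^ 2} := by
  set M : ℝ := max C₁ 1 with hM
  have hM1 : (1:ℝ) ≤ M := le_max_right _ _
  have hM0 : (0:ℝ) < M := lt_of_lt_of_le one_pos hM1
  refine ⟨Real.exp 1 * B * M ^ (d / 2), by positivity, rfl, ?_⟩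
  intro 𝒳 lam hlam0 hlamle u hu
  have main : ∀ J : ℕ, 1 ≤ J → ∀ x : 𝒳,
      (∑ j ∈ Finset.Icc 1 J, (u j x) ^ 2) ≤ (Real.exp 1 * B * M ^ (d / 2)) * J := by
    intro J hJ x
    have hJ0 : (0:ℝ) < J := by exact_mod_cast hJ
    have hJ1 : (1:ℝ) ≤ (J:ℝ) ^ (2 / d) :=
      Real.one_le_rpow (by exact_mod_cast hJ) (by positivity)
    set t : ℝ := (M * (J:ℝ) ^ (2 / d))⁻¹ with ht
    have hden : (1:ℝ) ≤ M * (J:ℝ) ^ (2 / d) := by nlinarith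
    have htpos : 0 < t := by positivity
    have ht1 : t ≤ 1 := by
      rw [ht]
      exact inv_le_one_of_one_le₀ hden
    obtain ⟨hsum, hbound⟩ := hu x t htpos ht1
    have key : ∀ j ∈ Finset.Icc 1 J,
        (u j x) ^ 2 ≤ Real.exp 1 * (Real.exp (-t * lam j) * (u j x) ^ 2) := by
      intro j hj
      obtain ⟨hj1, hjJ⟩ := Finset.mem_Icc.mp hj
      have hl : lam j ≤ C₁ * (j:ℝ) ^ (2 / d) := hlamle j hj1
      have hjJ' : ((j:ℝ)) ^ (2 / d) ≤ (J:ℝ) ^ (2 / d) :=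
        Real.rpow_le_rpow (by positivity) (by exact_mod_cast hjJ) (by positivity)
      have hlM : lam j ≤ M * (J:ℝ) ^ (2 / d) := by
        calc lam j ≤ C₁ * (j:ℝ) ^ (2 / d) := hl
          _ ≤ M * (J:ℝ) ^ (2 / d) := by
              apply mul_le_mul (le_max_left _ _) hjJ' (by positivity) hM0.le
      have h2 : t * lam j ≤ 1 := by
        calc t * lam j ≤ t * (M * (J:ℝ) ^ (2 / d)) :=
              mul_le_mul_of_nonneg_left hlM htpos.le
          _ = 1 := inv_mul_cancel₀ (by positivity)
      have h3 : (1:ℝ) ≤ Real.exp (1 + -t * lam j) := Real.one_le_exp (by linarith)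
      calc (u j x) ^ 2 = 1 * (u j x) ^ 2 := (one_mul _).symm
        _ ≤ Real.exp (1 + -t * lam j) * (u j x) ^ 2 :=
            mul_le_mul_of_nonneg_right h3 (sq_nonneg _)
        _ = Real.exp 1 * (Real.exp (-t * lam j) * (u j x) ^ 2) := by
            rw [Real.exp_add, mul_assoc]
    have step1 : ∑ j ∈ Finset.Icc 1 J, (u j x) ^ 2
        ≤ Real.exp 1 * ∑ j ∈ Finset.Icc 1 J, Real.exp (-t * lam j) * (u j x) ^ 2 := by
      rw [Finset.mul_sum]; exact Finset.sum_le_sum key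
    have step2 : ∑ j ∈ Finset.Icc 1 J, Real.exp (-t * lam j) * (u j x) ^ 2
        ≤ ∑' j : {k : ℕ // 1 ≤ k}, Real.exp (-t * lam j.1) * (u j.1 x) ^ 2 := by
      have heq : ∑ j ∈ (Finset.Icc 1 J).subtype (fun k => 1 ≤ k),
          Real.exp (-t * lam j.1) * (u j.1 x) ^ 2
          = ∑ j ∈ Finset.Icc 1 J, Real.exp (-t * lam j) * (u j x) ^ 2 := by
        rw [Finset.sum_subtype_eq_sum_filter (fun n => Real.exp (-t * lam n) * u n x ^ 2)]
        congr 1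
        ext j
        simp +contextual [Finset.mem_Icc]
      rw [← heq]
      exact Summable.sum_le_tsum _ (fun i _ => by positivity) hsum
    have step3 : t ^ (-(d / 2)) = M ^ (d / 2) * J := by
      have hdd : (2 / d) * (d / 2) = 1 := by field_simp
      have h1 : (M * (J:ℝ) ^ (2 / d)) ^ (d / 2) = M ^ (d / 2) * J := by
        rw [Real.mul_rpow hM0.le (by positivity), ← Real.rpow_mul (le_of_lt hJ0), hdd,
          Real.rpow_one]
      rw [ht, Real.rpow_neg (by positivity), Real.inv_rpow (by positivity), inv_inv, h1]
    calc ∑ j ∈ Finset.Icc 1 J, (u j x) ^ 2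
        ≤ Real.exp 1 * ∑ j ∈ Finset.Icc 1 J, Real.exp (-t * lam j) * (u j x) ^ 2 := step1
      _ ≤ Real.exp 1 * (∑' j : {k : ℕ // 1 ≤ k}, Real.exp (-t * lam j.1) * (u j.1 x) ^ 2) :=
          mul_le_mul_of_nonneg_left step2 (Real.exp_pos 1).le
      _ ≤ Real.exp 1 * (B * t ^ (-(d / 2))) :=
          mul_le_mul_of_nonneg_left hbound (Real.exp_pos 1).le
      _ = (Real.exp 1 * B * M ^ (d / 2)) * J := by rw [step3]; ring
  refine ⟨main, ⟨Real.exp 1 * B * M ^ (d / 2), ?_⟩⟩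
  rintro r ⟨J, hJ, x, rfl⟩
  have hJ0 : (0:ℝ) < J := by exact_mod_cast hJ
  have := main J hJ x
  rw [inv_mul_le_iff₀ hJ0]
  linarith [this]
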